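/- For every positive integer m and every μ > 0, the critical value satisfies α_m(μ) < 0, and for α = α_m(μ) the quartic h_{m,μ,α} has a negative double real root: there exists z < 0 with h_{m,μ,α}(z) = 0 and h′_{m,μ,α}(z) = 0. -/

import Mathlib

/-- The characteristic quartic `h_{m,μ,α}(z) = z⁴ − 2m²z² − αz + m⁴ + μm²` of the ODE
`ψ⁗ − 2m²ψ″ − αψ′ + (m⁴ + μm²)ψ = 0`. -/
noncomputable def hQuartic (m : ℕ) (μ α : ℝ) : ℝ → ℝ :=
  fun z => z ^ 4 - 2 * (m : ℝ) ^ 2 * z ^ 2 - α * z + (m : ℝ) ^ 4 + μ * (m : ℝ) ^ 2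

/-- The critical value
`α_m(μ) = −(4m/(3√3)) (√(4m² + 3μ) − 2m) √(m² + m√(4m² + 3μ))`. -/
noncomputable def alphaCrit (m : ℕ) (μ : ℝ) : ℝ :=
  -(4 * (m : ℝ) / (3 * Real.sqrt 3)) * (Real.sqrt (4 * (m : ℝ) ^ 2 + 3 * μ) - 2 * (m : ℝ)) *
    Real.sqrt ((m : ℝ) ^ 2 + (m : ℝ) * Real.sqrt (4 * (m : ℝ) ^ 2 + 3 * μ))

/-- For every positive integer `m` and every `μ > 0`, the critical value satisfies
`α_m(μ) < 0`, and for `α = α_m(μ)` the quartic `h_{m,μ,α}` has a negative double real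
root: there exists `z < 0` with `h_{m,μ,α}(z) = 0` and `h'_{m,μ,α}(z) = 0`. -/
theorem alphaCrit_neg_and_double_root (m : ℕ) (hm : 0 < m) (μ : ℝ) (hμ : 0 < μ) :
    alphaCrit m μ < 0 ∧
      ∃ z : ℝ, z < 0 ∧ hQuartic m μ (alphaCrit m μ) z = 0 ∧
        deriv (hQuartic m μ (alphaCrit m μ)) z = 0 := by
  set M : ℝ := (m : ℝ) with hMdef
  have hM : 0 < M := by rw [hMdef]; exact_mod_cast hm
  set s : ℝ := Real.sqrt (4 * M ^ 2 + 3 * μ) with hsdef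
  have hs_nonneg : 0 ≤ s := Real.sqrt_nonneg _
  have hs2 : s ^ 2 = 4 * M ^ 2 + 3 * μ := by
    rw [hsdef, Real.sq_sqrt]; nlinarith
  have hs_gt : 2 * M < s := by nlinarith
  set t : ℝ := (M ^ 2 + M * s) / 3 with htdef
  have ht : 0 < t := by rw [htdef]; nlinarith
  set u : ℝ := Real.sqrt t with hudef
  have hu_pos : 0 < u := Real.sqrt_pos.mpr ht
  have hu2 : u ^ 2 = t := by rw [hudef, Real.sq_sqrt ht.le]
  have h3 : Real.sqrt 3 * Real.sqrt 3 = 3 := Real.mul_self_sqrt (by norm_num)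
  have h3pos : (0 : ℝ) < Real.sqrt 3 := Real.sqrt_pos.mpr (by norm_num)
  -- rewrite alphaCrit
  have hα : alphaCrit m μ = -(4 * M / 3) * (s - 2 * M) * u := by
    have harg : M ^ 2 + M * s = 3 * t := by rw [htdef]; ring
    have hsqrt : Real.sqrt (M ^ 2 + M * s) = Real.sqrt 3 * u := by
      rw [harg, hudef, Real.sqrt_mul (by norm_num : (0:ℝ) ≤ 3)]
    rw [alphaCrit, ← hMdef, ← hsdef, hsqrt]
    have h9 : 4 * M / (3 * Real.sqrt 3) = 4 * M * Real.sqrt 3 / 9 := by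
      rw [div_eq_div_iff (by positivity) (by norm_num)]
      linear_combination (-12 * M) * h3
    rw [h9]
    linear_combination (-(4 * M * (s - 2 * M) * u) / 9) * h3
  constructor
  · rw [hα]
    nlinarith [mul_pos (mul_pos hM (sub_pos.mpr hs_gt)) hu_pos]
  · refine ⟨-u, by linarith, ?_, ?_⟩
    · rw [hQuartic, hα, ← hMdef]
      linear_combination (u ^ 2 + t - 2 * M ^ 2 - (4 * M / 3) * (s - 2 * M)) * hu2
        - (M ^ 2 / 3) * hs2
    · have hd : HasDerivAt (hQuartic m μ (alphaCrit m μ))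
          (4 * (-u) ^ 3 - 4 * M ^ 2 * (-u) - alphaCrit m μ) (-u) := by
        have h := ((((hasDerivAt_pow 4 (-u)).sub
          ((hasDerivAt_pow 2 (-u)).const_mul (2 * M ^ 2))).sub
          ((hasDerivAt_id (-u)).const_mul (alphaCrit m μ))).add_const
          (M ^ 4)).add_const (μ * M ^ 2)
        simp only [id, Pi.sub_apply] at h
        unfold hQuartic
        rw [← hMdef]
        refine h.congr_deriv ?_
        push_cast
        ring
      rw [hd.deriv, hα]
      linear_combination (-4 * u) * hu2
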